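/- Let 1 = G₀ ⊆ G₁ ⊆ ... ⊆ Gₙ = G be the upper central series of a group G, so that Gᵢ/G_{i-1} = Z(G/G_{i-1}) for each i. If G is R-torsion-free (i.e., for every prime p for which G has an element of order p, p·1_R is invertible in R), then each factor group Gᵢ/G_{i-1} is R-torsion-free. -/

import Mathlib

open CategoryTheory

/-- If `c = [a,b]` is central, then `a^n * b * a^(-n) = c^n * b`. -/
private lemma conj_pow_eq {Q : Type*} [Group Q] (a b : Q)
    (hc : a * b * a⁻¹ * b⁻¹ ∈ Subgroup.center Q) :
    ∀ n : ℕ, a ^ n * b * (a ^ n)⁻¹ = (a * b * a⁻¹ * b⁻¹) ^ n * b := by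
  set c := a * b * a⁻¹ * b⁻¹ with hcdef
  have hca : Commute a c := ((Subgroup.mem_center_iff.mp hc) a)
  intro n
  induction n with
  | zero => simp
  | succ n ih =>
    have hcan : a * c ^ n = c ^ n * a := hca.pow_right n
    have hab : a * b * a⁻¹ = c * b := by
      rw [hcdef]; group
    calc a ^ (n + 1) * b * (a ^ (n + 1))⁻¹
        = a * (a ^ n * b * (a ^ n)⁻¹) * a⁻¹ := by rw [pow_succ']; group
      _ = a * (c ^ n * b) * a⁻¹ := by rw [ih]
      _ = c ^ n * (a * b * a⁻¹) := by rw [← mul_assoc, hcan]; group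
      _ = c ^ n * (c * b) := by rw [hab]
      _ = c ^ (n + 1) * b := by rw [pow_succ]; group

/-- If `a^p` is central and `[a,b]` is central, then `[a,b]^p = 1`. -/
private lemma commutator_pow_eq_one {Q : Type*} [Group Q] (a b : Q) (p : ℕ)
    (ha : a ^ p ∈ Subgroup.center Q)
    (hc : a * b * a⁻¹ * b⁻¹ ∈ Subgroup.center Q) :
    (a * b * a⁻¹ * b⁻¹) ^ p = 1 := by
  have h := conj_pow_eq a b hc p
  have h2 : a ^ p * b * (a ^ p)⁻¹ = b := by
    have := (Subgroup.mem_center_iff.mp ha) b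
    rw [← this]; group
  rw [h2] at h
  have : (a * b * a⁻¹ * b⁻¹) ^ p * b = 1 * b := by rw [← h]; group
  exact mul_right_cancel this

/-- An element of `Z_{i+1}(G)` maps to the center of `G / Z_i(G)`. -/
private lemma mem_center_quotient {G : Type*} [Group G] {i : ℕ} {g : G}
    (hg : g ∈ Subgroup.upperCentralSeries G (i + 1)) :
    (g : G ⧸ Subgroup.upperCentralSeries G i) ∈ Subgroup.center (G ⧸ Subgroup.upperCentralSeries G i) := by
  rw [Subgroup.mem_center_iff]
  intro q
  induction q using QuotientGroup.induction_on with
  | H y =>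
    rw [← QuotientGroup.mk_mul, ← QuotientGroup.mk_mul, QuotientGroup.eq]
    have := Subgroup.mem_upperCentralSeries_succ_iff.mp
      ((Subgroup.upperCentralSeries G (i + 1)).inv_mem hg) y⁻¹
    have heq : (y * g)⁻¹ * (g * y) = g⁻¹ * y⁻¹ * (g⁻¹)⁻¹ * (y⁻¹)⁻¹ := by group
    rw [heq]
    exact this

/-- Key lemma: if `G` has no element of order `p`, and `g ∈ Z_{i+1}` with
`g^p ∈ Z_i`, then `g ∈ Z_i`. -/
private lemma key_lemma {G : Type*} [Group G] (p : ℕ)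
    (hne : ∀ h : G, h ^ p = 1 → h = 1) :
    ∀ i : ℕ, ∀ g : G, g ∈ Subgroup.upperCentralSeries G (i + 1) →
      g ^ p ∈ Subgroup.upperCentralSeries G i → g ∈ Subgroup.upperCentralSeries G i := by
  intro i
  induction i with
  | zero =>
    intro g _ hgp
    rw [Subgroup.upperCentralSeries_zero, Subgroup.mem_bot] at hgp ⊢
    exact hne g hgp
  | succ i ih =>
    intro g hg hgp
    rw [Subgroup.mem_upperCentralSeries_succ_iff]
    intro y
    set c := g * y * g⁻¹ * y⁻¹ with hcdef
    have hc : c ∈ Subgroup.upperCentralSeries G (i + 1) :=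
      Subgroup.mem_upperCentralSeries_succ_iff.mp hg y
    -- suffices to show c ^ p ∈ Z_i
    apply ih c hc
    -- work in the quotient G / Z_i
    have ha : ((g : G) : G ⧸ Subgroup.upperCentralSeries G i) ^ p ∈
        Subgroup.center (G ⧸ Subgroup.upperCentralSeries G i) := by
      have : (((g ^ p : G)) : G ⧸ Subgroup.upperCentralSeries G i) ∈
          Subgroup.center (G ⧸ Subgroup.upperCentralSeries G i) := mem_center_quotient hgp
      simpa using this
    have hcc : ((c : G) : G ⧸ Subgroup.upperCentralSeries G i) ∈
        Subgroup.center (G ⧸ Subgroup.upperCentralSeries G i) := mem_center_quotient hc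
    have hcomm : ((c : G) : G ⧸ Subgroup.upperCentralSeries G i) =
        (g : G ⧸ Subgroup.upperCentralSeries G i) * (y : G) * (g : G ⧸ Subgroup.upperCentralSeries G i)⁻¹ *
          ((y : G) : G ⧸ Subgroup.upperCentralSeries G i)⁻¹ := by
      rw [hcdef]; rfl
    rw [hcomm] at hcc
    have := commutator_pow_eq_one ((g : G) : G ⧸ Subgroup.upperCentralSeries G i)
      ((y : G) : G ⧸ Subgroup.upperCentralSeries G i) p ha hcc
    have hcp1 : (((c ^ p : G)) : G ⧸ Subgroup.upperCentralSeries G i) = 1 := by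
      have hmk : (((c ^ p : G)) : G ⧸ Subgroup.upperCentralSeries G i)
          = ((c : G) : G ⧸ Subgroup.upperCentralSeries G i) ^ p :=
        map_pow (QuotientGroup.mk' (Subgroup.upperCentralSeries G i)) c p
      rw [hmk, hcomm]
      exact this
    rwa [QuotientGroup.eq_one_iff] at hcp1

/-- `G` is `R`-torsion-free: for each prime `p` such that `G` has an element of order
`p`, the element `p • 1` is invertible in `R`. -/
def RTorsionFreeP (R : Type) (G : Type) [CommRing R] [Group G] : Prop :=
  ∀ p : ℕ, p.Prime → (∃ g : G, g ≠ 1 ∧ g ^ p = 1) → IsUnit ((p : R))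

/-- If `G` is `R`-torsion-free, then each factor `G_{i+1}/G_i` of the upper central
series `1 = G_0 ⊆ G_1 ⊆ ... ⊆ G_n = G` of `G` is `R`-torsion-free. -/
theorem upperCentralSeries_factor_torsionFree (R G : Type) [CommRing R] [Group G]
    (n : ℕ) (htop : Subgroup.upperCentralSeries G n = ⊤) (htf : RTorsionFreeP R G) :
    ∀ i : ℕ, RTorsionFreeP R
      (↥(Subgroup.upperCentralSeries G (i + 1)) ⧸
        (Subgroup.upperCentralSeries G i).subgroupOf (Subgroup.upperCentralSeries G (i + 1))) := by
  intro i p hp ⟨gbar, hgne, hgp⟩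
  apply htf p hp
  by_contra hnone
  push_neg at hnone
  have hne : ∀ h : G, h ^ p = 1 → h = 1 := by
    intro h hh
    by_contra hh1
    exact hnone h hh1 hh
  obtain ⟨g, rfl⟩ := QuotientGroup.mk_surjective gbar
  have hgpmem : ((g : G)) ^ p ∈ Subgroup.upperCentralSeries G i := by
    have : ((g ^ p : ↥(Subgroup.upperCentralSeries G (i + 1))) :
        ↥(Subgroup.upperCentralSeries G (i + 1)) ⧸
          (Subgroup.upperCentralSeries G i).subgroupOf (Subgroup.upperCentralSeries G (i + 1))) = 1 := by
      rw [← hgp]; rfl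
    rw [QuotientGroup.eq_one_iff] at this
    exact (Subgroup.mem_subgroupOf).mp this
  have hmem : ((g : G)) ∈ Subgroup.upperCentralSeries G i :=
    key_lemma p hne i (g : G) g.2 hgpmem
  apply hgne
  rw [QuotientGroup.eq_one_iff, Subgroup.mem_subgroupOf]
  exact hmem
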